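/- Finite-time convergence under the direct parametrization (Theorem 3): for a finite MDP, if Σ_{t=0}^∞ η_t d_t(s) = ∞ for every state s, then under direct-parametrization policy updates with exact value functions there exists t_0 such that for all t ≥ t_0 and all (s,a), q_t(s,a) = q_⋆(s,a). -/

import Mathlib

open Finset Filter

/-- A stationary stochastic policy on a finite MDP. -/
def IsPolicy {S A : Type*} [Fintype A] (π : S → A → ℝ) : Prop :=
  (∀ s a, 0 ≤ π s a) ∧ ∀ s, ∑ a, π s a = 1

/-- `v` is the state value function of policy `π` (Bellman equation). -/
def IsValueOf {S A : Type*} [Fintype S] [Fintype A]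
    (p : S → A → S → ℝ) (r : S → A → ℝ) (γ : ℝ)
    (π : S → A → ℝ) (v : S → ℝ) : Prop :=
  ∀ s, v s = ∑ a, π s a * (r s a + γ * ∑ s', p s a s' * v s')

lemma comparison {S A : Type*} [Fintype S] [Nonempty S] [Fintype A]
    (p : S → A → S → ℝ) (hp : ∀ s a s', 0 ≤ p s a s')
    (hpsum : ∀ s a, ∑ s', p s a s' = 1) (r : S → A → ℝ) (γ : ℝ) (hγ0 : 0 ≤ γ) (hγ1 : γ < 1)
    (π : S → A → ℝ) (hπ : IsPolicy π) (u w : S → ℝ)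
    (hu : ∀ s, u s ≤ ∑ a, π s a * (r s a + γ * ∑ s', p s a s' * u s'))
    (hw : ∀ s, ∑ a, π s a * (r s a + γ * ∑ s', p s a s' * w s') ≤ w s) :
    ∀ s, u s ≤ w s := by
  have hne : (Finset.univ : Finset S).Nonempty := Finset.univ_nonempty
  obtain ⟨s1, -, hs1⟩ := Finset.exists_mem_eq_sup' hne (fun s => u s - w s)
  set M := Finset.univ.sup' hne (fun s => u s - w s) with hMdef
  have hle : ∀ s, u s - w s ≤ M := fun s => Finset.le_sup' (fun s => u s - w s) (Finset.mem_univ s)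
  have hkey : M ≤ γ * M := by
    have h1 : u s1 - w s1 ≤ ∑ a, π s1 a * (γ * ∑ s', p s1 a s' * (u s' - w s')) := by
      have h0 := sub_le_sub (hu s1) (hw s1)
      calc u s1 - w s1 ≤ _ := h0
      _ = ∑ a, π s1 a * (γ * ∑ s', p s1 a s' * (u s' - w s')) := by
        rw [← Finset.sum_sub_distrib]
        refine Finset.sum_congr rfl fun a _ => ?_
        have hi : (∑ s', p s1 a s' * u s') - (∑ s', p s1 a s' * w s')
            = ∑ s', p s1 a s' * (u s' - w s') := by
          rw [← Finset.sum_sub_distrib]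
          exact Finset.sum_congr rfl fun s' _ => (mul_sub _ _ _).symm
        rw [← hi]; ring
    have h2 : ∑ a, π s1 a * (γ * ∑ s', p s1 a s' * (u s' - w s')) ≤ ∑ a, π s1 a * (γ * M) := by
      refine Finset.sum_le_sum fun a _ => mul_le_mul_of_nonneg_left ?_ (hπ.1 s1 a)
      refine mul_le_mul_of_nonneg_left ?_ hγ0
      calc ∑ s', p s1 a s' * (u s' - w s')
          ≤ ∑ s', p s1 a s' * M :=
            Finset.sum_le_sum fun s' _ => mul_le_mul_of_nonneg_left (hle s') (hp s1 a s')
        _ = M := by rw [← Finset.sum_mul, hpsum]; ring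
    have h3 : ∑ a, π s1 a * (γ * M) = γ * M := by rw [← Finset.sum_mul, hπ.2]; ring
    calc M = u s1 - w s1 := hs1
    _ ≤ _ := h1
    _ ≤ _ := h2
    _ = γ * M := h3
  intro s
  nlinarith [hle s, hkey, hγ1]

lemma vi_of_min {A : Type*} [Fintype A] (x y : A → ℝ)
    (hx0 : ∀ a, 0 ≤ x a) (hx1 : ∑ a, x a = 1)
    (h : ∀ w : A → ℝ, (∀ a, 0 ≤ w a) → ∑ a, w a = 1 →
      ∑ a, (x a - y a) ^ 2 ≤ ∑ a, (w a - y a) ^ 2)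
    (w : A → ℝ) (hw0 : ∀ a, 0 ≤ w a) (hw1 : ∑ a, w a = 1) :
    ∑ a, (y a - x a) * (w a - x a) ≤ 0 := by
  set S1 : ℝ := ∑ a, (x a - y a) * (w a - x a) with hS1
  set S2 : ℝ := ∑ a, (w a - x a) ^ 2 with hS2
  have hS2nn : 0 ≤ S2 := Finset.sum_nonneg fun a _ => sq_nonneg _
  have hθ : ∀ θ : ℝ, 0 < θ → θ ≤ 1 → 0 ≤ 2 * θ * S1 + θ ^ 2 * S2 := by
    intro θ hθ0 hθ1
    have hfeas0 : ∀ a, 0 ≤ x a + θ * (w a - x a) := by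
      intro a
      have he : x a + θ * (w a - x a) = (1 - θ) * x a + θ * w a := by ring
      rw [he]
      exact add_nonneg (mul_nonneg (by linarith) (hx0 a)) (mul_nonneg hθ0.le (hw0 a))
    have hfeas1 : ∑ a, (x a + θ * (w a - x a)) = 1 := by
      rw [Finset.sum_add_distrib, ← Finset.mul_sum, Finset.sum_sub_distrib, hx1, hw1]; ring
    have hmin := h _ hfeas0 hfeas1
    have hexp : ∑ a, ((x a + θ * (w a - x a)) - y a) ^ 2
        = ∑ a, (x a - y a) ^ 2 + (2 * θ * S1 + θ ^ 2 * S2) := by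
      rw [hS1, hS2, Finset.mul_sum, Finset.mul_sum, ← Finset.sum_add_distrib,
        ← Finset.sum_add_distrib]
      exact Finset.sum_congr rfl fun a _ => by ring
    rw [hexp] at hmin
    linarith
  have hgoal : 0 ≤ S1 := by
    by_contra hneg
    push_neg at hneg
    rcases eq_or_lt_of_le hS2nn with h2 | h2
    · have := hθ 1 one_pos le_rfl
      rw [← h2] at this; linarith
    · have hθval : 0 < min 1 (-S1 / S2) := lt_min one_pos (div_pos (by linarith) h2)
      have hm1 : min 1 (-S1 / S2) ≤ 1 := min_le_left _ _
      have hm2 : min 1 (-S1 / S2) ≤ -S1 / S2 := min_le_right _ _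
      have hineq := hθ _ hθval hm1
      set θ := min 1 (-S1 / S2) with hθdef
      have hts : θ * S2 ≤ -S1 := by
        rw [← div_mul_cancel₀ (-S1) (ne_of_gt h2)]
        exact mul_le_mul_of_nonneg_right hm2 h2.le
      nlinarith
  have hfin : ∑ a, (y a - x a) * (w a - x a) = -S1 := by
    rw [hS1, ← Finset.sum_neg_distrib]
    exact Finset.sum_congr rfl fun a _ => by ring
  rw [hfin]; linarith

lemma vi_pair {A : Type*} [Fintype A] (x y : A → ℝ)
    (hx0 : ∀ a, 0 ≤ x a) (hx1 : ∑ a, x a = 1)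
    (hvi : ∀ w : A → ℝ, (∀ a, 0 ≤ w a) → ∑ a, w a = 1 →
      ∑ a, (y a - x a) * (w a - x a) ≤ 0)
    (a b : A) (ha : 0 < x a) : y b - x b ≤ y a - x a := by
  classical
  rcases eq_or_ne a b with rfl | hab
  · exact le_rfl
  set w : A → ℝ := fun c => x c + x a * ((if c = b then 1 else 0) - (if c = a then 1 else 0))
    with hwdef
  have hw0 : ∀ c, 0 ≤ w c := by
    intro c
    simp only [hwdef]
    rcases eq_or_ne c a with rfl | hca
    · simp [hab]
    · rcases eq_or_ne c b with rfl | hcb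
      · simp [hca]
        first
        | linarith [hx0 c, ha]
        | linarith [hx0 b, ha]
      · simp [hca, hcb]
        exact hx0 c
  have hw1 : ∑ c, w c = 1 := by
    simp [hwdef, Finset.sum_add_distrib, ← Finset.mul_sum, Finset.sum_sub_distrib,
      Finset.sum_ite_eq', hx1]
  have hv := hvi w hw0 hw1
  have hcalc : ∑ c, (y c - x c) * (w c - x c)
      = x a * ((y b - x b) - (y a - x a)) := by
    have hterm : ∀ c, (y c - x c) * (w c - x c)
        = x a * ((y c - x c) * (if c = b then 1 else 0))
          - x a * ((y c - x c) * (if c = a then 1 else 0)) := by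
      intro c; simp only [hwdef]; ring
    rw [Finset.sum_congr rfl (fun c _ => hterm c), Finset.sum_sub_distrib,
      ← Finset.mul_sum, ← Finset.mul_sum]
    simp [mul_ite, Finset.sum_ite_eq']
    ring
  rw [hcalc] at hv
  nlinarith

/-- **Finite-time convergence under the direct parametrization** (Theorem 3):
if `Σ_t η_t d_t(s) = ∞` in every state `s` (condition C4), then under
direct-parametrization policy updates with exact value functions there exists
`t₀` such that `q_t = q⋆` for all `t ≥ t₀`. -/
theorem finite_time_direct
    {S A : Type*} [Fintype S] [Nonempty S] [Fintype A] [Nonempty A]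
    (p : S → A → S → ℝ) (hp : ∀ s a s', 0 ≤ p s a s')
    (hpsum : ∀ s a, ∑ s', p s a s' = 1)
    (r : S → A → ℝ) (γ : ℝ) (hγ0 : 0 ≤ γ) (hγ1 : γ < 1)
    (η : ℕ → ℝ) (hη : ∀ t, 0 < η t)
    (d : ℕ → S → ℝ) (hd : ∀ t s, 0 < d t s)
    (π : ℕ → S → A → ℝ) (hπ : ∀ t, IsPolicy (π t))
    (v : ℕ → S → ℝ) (hv : ∀ t, IsValueOf p r γ (π t) (v t))
    (q : ℕ → S → A → ℝ)
    (hq : ∀ t s a, q t s a = r s a + γ * ∑ s', p s a s' * v t s')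
    -- `π (t+1) (·|s)` is the Euclidean projection of
    -- `π t (·|s) + η t * d t s * q t (s, ·)` onto the simplex:
    (hproj : ∀ t s, ∀ w : A → ℝ, (∀ a, 0 ≤ w a) → ∑ a, w a = 1 →
        ∑ a, (π (t + 1) s a - (π t s a + η t * d t s * q t s a)) ^ 2
          ≤ ∑ a, (w a - (π t s a + η t * d t s * q t s a)) ^ 2)
    -- condition C4:
    (hC4 : ∀ s, Tendsto (fun T => ∑ t ∈ Finset.range T, η t * d t s) atTop atTop)
    -- optimal value `q⋆(s,a) = max_π q_π(s,a)`:
    (qstar : S → A → ℝ)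
    (hqstar : ∀ s a, IsGreatest {x : ℝ | ∃ (π' : S → A → ℝ) (w : S → ℝ),
        IsPolicy π' ∧ IsValueOf p r γ π' w ∧
        r s a + γ * ∑ s', p s a s' * w s' = x} (qstar s a)) :
    ∃ t0 : ℕ, ∀ t ≥ t0, ∀ s a, q t s a = qstar s a := by
  classical
  have hα : ∀ t s, 0 < η t * d t s := fun t s => mul_pos (hη t) (hd t s)
  have hneS : (Finset.univ : Finset S).Nonempty := Finset.univ_nonempty
  have hneA : (Finset.univ : Finset A).Nonempty := Finset.univ_nonempty
  have hvq : ∀ t s, v t s = ∑ a, π t s a * q t s a := by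
    intro t s
    rw [hv t s]
    exact Finset.sum_congr rfl fun a _ => by rw [hq]
  -- variational inequality for the projection
  have hVI : ∀ t s (w : A → ℝ), (∀ a, 0 ≤ w a) → ∑ a, w a = 1 →
      ∑ a, ((π t s a + η t * d t s * q t s a) - π (t+1) s a) * (w a - π (t+1) s a) ≤ 0 := by
    intro t s w hw0 hw1
    exact vi_of_min (π (t+1) s) (fun a => π t s a + η t * d t s * q t s a)
      (fun a => (hπ (t+1)).1 s a) ((hπ (t+1)).2 s) (hproj t s) w hw0 hw1
  have hPair : ∀ t s a b, 0 < π (t+1) s a →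
      (π t s b + η t * d t s * q t s b) - π (t+1) s b
        ≤ (π t s a + η t * d t s * q t s a) - π (t+1) s a := by
    intro t s a b ha
    exact vi_pair (π (t+1) s) (fun c => π t s c + η t * d t s * q t s c)
      (fun c => (hπ (t+1)).1 s c) ((hπ (t+1)).2 s) (hVI t s) a b ha
  set Δ : ℕ → S → ℝ := fun t s => ∑ a, (π (t+1) s a - π t s a) * q t s a with hΔdef
  have hΔ1 : ∀ t s, ∑ a, (π (t+1) s a - π t s a) ^ 2 ≤ (η t * d t s) * Δ t s := by
    intro t s
    have h0 := hVI t s (π t s) (fun a => (hπ t).1 s a) ((hπ t).2 s)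
    have hexp : ∑ a, ((π t s a + η t * d t s * q t s a) - π (t+1) s a) * (π t s a - π (t+1) s a)
        = ∑ a, (π (t+1) s a - π t s a) ^ 2 - (η t * d t s) * Δ t s := by
      rw [hΔdef]
      rw [Finset.mul_sum, ← Finset.sum_sub_distrib]
      exact Finset.sum_congr rfl fun a _ => by ring
    rw [hexp] at h0
    linarith
  have hΔ0 : ∀ t s, 0 ≤ Δ t s := by
    intro t s
    have h1 := hΔ1 t s
    have h2 : (0:ℝ) ≤ ∑ a, (π (t+1) s a - π t s a) ^ 2 :=
      Finset.sum_nonneg fun a _ => sq_nonneg _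
    nlinarith [hα t s]
  have hsumq : ∀ t s, ∑ a, π (t+1) s a * q t s a = v t s + Δ t s := by
    intro t s
    rw [hvq t s, hΔdef, ← Finset.sum_add_distrib]
    exact Finset.sum_congr rfl fun a _ => by ring
  have himp : ∀ t s, v t s ≤ v (t+1) s := by
    intro t
    refine comparison p hp hpsum r γ hγ0 hγ1 (π (t+1)) (hπ (t+1)) (v t) (v (t+1)) ?_ ?_
    · intro s
      have h1 : v t s ≤ ∑ a, π (t+1) s a * q t s a := by
        rw [hsumq t s]; linarith [hΔ0 t s]
      calc v t s ≤ ∑ a, π (t+1) s a * q t s a := h1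
      _ = ∑ a, π (t+1) s a * (r s a + γ * ∑ s', p s a s' * v t s') :=
        Finset.sum_congr rfl fun a _ => by rw [hq]
    · intro s; exact le_of_eq (hv (t+1) s).symm
  have hmono : ∀ s, Monotone fun t => v t s := fun s =>
    monotone_nat_of_le_succ fun t => himp t s
  have himp2 : ∀ t s, Δ t s ≤ v (t+1) s - v t s := by
    intro t s
    have h1 : ∑ a, π (t+1) s a * q t s a ≤ v (t+1) s := by
      rw [hv (t+1) s]
      refine Finset.sum_le_sum fun a _ => ?_
      rw [hq]
      refine mul_le_mul_of_nonneg_left ?_ ((hπ (t+1)).1 s a)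
      have h2 : ∑ s', p s a s' * v t s' ≤ ∑ s', p s a s' * v (t+1) s' :=
        Finset.sum_le_sum fun s' _ => mul_le_mul_of_nonneg_left (himp t s') (hp s a s')
      nlinarith
    have h3 := hsumq t s
    linarith
  -- uniform upper bound on values
  set R : ℝ := Finset.univ.sup' hneS (fun s => Finset.univ.sup' hneA fun a => |r s a|) with hRdef
  set B : ℝ := R / (1 - γ) with hBdef
  have h1γ : (1:ℝ) - γ ≠ 0 := by linarith
  have hrR : ∀ s a, r s a ≤ R := by
    intro s a
    calc r s a ≤ |r s a| := le_abs_self _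
    _ ≤ Finset.univ.sup' hneA (fun a => |r s a|) :=
      Finset.le_sup' (fun a => |r s a|) (Finset.mem_univ a)
    _ ≤ R := Finset.le_sup' (fun s => Finset.univ.sup' hneA fun a => |r s a|) (Finset.mem_univ s)
  have hRB : R + γ * B = B := by
    rw [hBdef]; field_simp; ring
  have hub : ∀ t s, v t s ≤ B := by
    intro t
    refine comparison p hp hpsum r γ hγ0 hγ1 (π t) (hπ t) (v t) (fun _ => B)
      (fun s => le_of_eq (hv t s)) ?_
    intro s
    have hterm : ∀ a, r s a + γ * ∑ s', p s a s' * B ≤ B := by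
      intro a
      have h1 : ∑ s', p s a s' * B = B := by rw [← Finset.sum_mul, hpsum]; ring
      rw [h1]
      nlinarith [hrR s a, hRB]
    calc ∑ a, π t s a * (r s a + γ * ∑ s', p s a s' * B)
        ≤ ∑ a, π t s a * B := Finset.sum_le_sum fun a _ =>
          mul_le_mul_of_nonneg_left (hterm a) ((hπ t).1 s a)
    _ = B := by rw [← Finset.sum_mul, (hπ t).2]; ring
  have hbdd : ∀ s, BddAbove (Set.range fun t => v t s) := by
    intro s; exact ⟨B, by rintro x ⟨t, rfl⟩; exact hub t s⟩
  set vinf : S → ℝ := fun s => ⨆ t, v t s with hvinfdef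
  have hle_vinf : ∀ t s, v t s ≤ vinf s := fun t s => le_ciSup (hbdd s) t
  have htend : ∀ s, Tendsto (fun t => v t s) atTop (nhds (vinf s)) := fun s =>
    tendsto_atTop_ciSup (hmono s) (hbdd s)
  set qinf : S → A → ℝ := fun s a => r s a + γ * ∑ s', p s a s' * vinf s' with hqinfdef
  have hqle : ∀ t s a, q t s a ≤ qinf s a := by
    intro t s a
    rw [hq]
    have h2 : ∑ s', p s a s' * v t s' ≤ ∑ s', p s a s' * vinf s' :=
      Finset.sum_le_sum fun s' _ => mul_le_mul_of_nonneg_left (hle_vinf t s') (hp s a s')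
    show r s a + γ * ∑ s', p s a s' * v t s' ≤ r s a + γ * ∑ s', p s a s' * vinf s'
    nlinarith
  have hqtend : ∀ s a, Tendsto (fun t => q t s a) atTop (nhds (qinf s a)) := by
    intro s a
    have h1 : Tendsto (fun t => ∑ s', p s a s' * v t s') atTop
        (nhds (∑ s', p s a s' * vinf s')) :=
      tendsto_finset_sum _ fun s' _ => (htend s').const_mul _
    have h2 := (h1.const_mul γ).const_add (r s a)
    have hfun : (fun t => q t s a) = fun t => r s a + γ * ∑ s', p s a s' * v t s' :=
      funext fun t => hq t s a
    rw [hfun]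
    exact h2
  -- divergence of step sizes rules out persistent per-step improvement
  have hdiverge : ∀ s (c : ℝ), 0 < c → ∀ T : ℕ,
      ¬ (∀ t, T ≤ t → c * (η t * d t s) ≤ v (t+1) s - v t s) := by
    intro s c hc T hcon
    have hbound : ∀ T', T ≤ T' →
        ∑ t ∈ Finset.range T', η t * d t s
          ≤ (∑ t ∈ Finset.range T, η t * d t s) + (B - v T s) / c := by
      intro T' hTT'
      have hsplit : ∑ t ∈ Finset.range T', η t * d t s
          = (∑ t ∈ Finset.range T, η t * d t s) + ∑ t ∈ Finset.Ico T T', η t * d t s := by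
        rw [Finset.range_eq_Ico, Finset.range_eq_Ico]
        exact (Finset.sum_Ico_consecutive (fun t => η t * d t s) (Nat.zero_le T) hTT').symm
      have htel : ∑ t ∈ Finset.Ico T T', (v (t+1) s - v t s) = v T' s - v T s := by
        rw [Finset.sum_Ico_eq_sub _ hTT', Finset.sum_range_sub (fun t => v t s),
          Finset.sum_range_sub (fun t => v t s)]
        ring
      have h1 : c * ∑ t ∈ Finset.Ico T T', η t * d t s ≤ v T' s - v T s := by
        rw [Finset.mul_sum, ← htel]
        exact Finset.sum_le_sum fun t ht => hcon t (Finset.mem_Ico.mp ht).1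
      have h3 : ∑ t ∈ Finset.Ico T T', η t * d t s ≤ (B - v T s) / c := by
        rw [le_div_iff₀ hc]
        nlinarith [hub T' s]
      linarith [hsplit.le, hsplit.ge]
    have hev := (hC4 s).eventually_gt_atTop
      ((∑ t ∈ Finset.range T, η t * d t s) + (B - v T s) / c)
    obtain ⟨T', hT'1, hT'2⟩ := (hev.and (eventually_ge_atTop T)).exists
    exact absurd (hbound T' hT'2) (not_le.mpr hT'1)
  -- the key one-step inequality
  have hkey : ∀ (δ : ℝ), 0 < δ → ∀ t s a b, 0 < π (t+1) s a → q t s a + δ ≤ q t s b →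
      (δ ^ 2 / 2) * (η t * d t s) ≤ v (t+1) s - v t s := by
    intro δ hδ t s a b hpos hgap
    have hαpos := hα t s
    have hpair := hPair t s a b hpos
    have hmm : 0 ≤ (η t * d t s) * (q t s b - q t s a - δ) :=
      mul_nonneg hαpos.le (by linarith)
    have hub' : (η t * d t s) * δ ≤ (π (t+1) s b - π t s b) - (π (t+1) s a - π t s a) := by
      nlinarith
    have hne : a ≠ b := by
      intro h; rw [h] at hgap; linarith
    have hsub : (π (t+1) s a - π t s a)^2 + (π (t+1) s b - π t s b)^2
        ≤ ∑ c, (π (t+1) s c - π t s c) ^ 2 := by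
      have h5 := Finset.sum_le_sum_of_subset_of_nonneg
        (Finset.subset_univ ({a, b} : Finset A))
        (fun c _ _ => sq_nonneg (π (t+1) s c - π t s c))
      rwa [Finset.sum_pair hne] at h5
    have hsq : ((η t * d t s) * δ) ^ 2 / 2 ≤ ∑ c, (π (t+1) s c - π t s c) ^ 2 := by
      nlinarith [sq_nonneg ((π (t+1) s a - π t s a) + (π (t+1) s b - π t s b)),
        mul_pos hαpos hδ]
    have h1 := hΔ1 t s
    have h2 := himp2 t s
    have h3 : δ^2/2 * (η t * d t s) ≤ Δ t s := by
      by_contra hcon'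
      push_neg at hcon'
      have h4 : (η t * d t s) * Δ t s < (η t * d t s) * (δ^2/2 * (η t * d t s)) :=
        mul_lt_mul_of_pos_left hcon' hαpos
      nlinarith
    linarith
  -- Bellman optimality: qinf ≤ vinf
  have hopt : ∀ s a, qinf s a ≤ vinf s := by
    by_contra hcon
    push_neg at hcon
    obtain ⟨s, a, hsa⟩ := hcon
    set δ : ℝ := qinf s a - vinf s with hδdef
    have hδ : 0 < δ := by linarith
    have hE1 : ∀ᶠ t in atTop, qinf s a - δ/4 < q t s a :=
      (hqtend s a).eventually (eventually_gt_nhds (by linarith))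
    have hE2 : Tendsto (fun t => v (t+1) s - v t s) atTop (nhds 0) := by
      have ha1 := (htend s).comp (tendsto_add_atTop_nat 1)
      have ha2 := ha1.sub (htend s)
      simpa using ha2
    have hE2' : ∀ᶠ t in atTop, v (t+1) s - v t s < δ/4 :=
      hE2.eventually (eventually_lt_nhds (by linarith : (0:ℝ) < δ/4))
    obtain ⟨T, hT⟩ := eventually_atTop.mp (hE1.and hE2')
    refine hdiverge s ((δ/2)^2/2) (by positivity) T ?_
    intro t ht
    obtain ⟨h1, h2⟩ := hT t ht
    have hex : ∃ a', 0 < π (t+1) s a' ∧ q t s a' ≤ v t s + Δ t s := by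
      by_contra hcon2
      push_neg at hcon2
      have hexpos : ∃ b, 0 < π (t+1) s b := by
        by_contra hall
        push_neg at hall
        have hz : (1:ℝ) = 0 := by
          rw [← (hπ (t+1)).2 s]
          exact Finset.sum_eq_zero fun b _ => le_antisymm (hall b) ((hπ (t+1)).1 s b)
        linarith
      have hlt : ∑ b, π (t+1) s b * (v t s + Δ t s) < ∑ b, π (t+1) s b * q t s b := by
        apply Finset.sum_lt_sum
        · intro b _
          rcases eq_or_lt_of_le ((hπ (t+1)).1 s b) with hb | hb
          · rw [← hb]; simp
          · exact mul_le_mul_of_nonneg_left (hcon2 b hb).le hb.le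
        · obtain ⟨b, hb⟩ := hexpos
          exact ⟨b, Finset.mem_univ b, mul_lt_mul_of_pos_left (hcon2 b hb) hb⟩
      rw [hsumq t s, ← Finset.sum_mul, (hπ (t+1)).2] at hlt
      simp at hlt
    obtain ⟨a', ha'pos, ha'le⟩ := hex
    have hΔle : Δ t s ≤ δ/4 := le_trans (himp2 t s) h2.le
    have hvle : v t s ≤ vinf s := hle_vinf t s
    have hgap2 : q t s a' + δ/2 ≤ q t s a := by
      have hqa : qinf s a = vinf s + δ := by rw [hδdef]; ring
      clear_value δ Δ vinf qinf
      linarith [ha'le, hΔle, hvle, h1, hqa]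
    exact hkey (δ/2) (by linarith) t s a' a ha'pos hgap2
  -- existence of an optimal action
  have hvle_max : ∀ s, ∃ a, qinf s a = vinf s := by
    intro s
    obtain ⟨a0, -, ha0⟩ := Finset.exists_mem_eq_sup' hneA (fun a => qinf s a)
    have h1 : vinf s ≤ qinf s a0 := by
      rw [← ha0]
      show (⨆ t, v t s) ≤ _
      refine ciSup_le fun t => ?_
      have h2 : v t s ≤ Finset.univ.sup' hneA (fun a => q t s a) := by
        rw [hvq t s]
        calc ∑ a, π t s a * q t s a
            ≤ ∑ a, π t s a * Finset.univ.sup' hneA (fun a => q t s a) :=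
            Finset.sum_le_sum fun a _ => mul_le_mul_of_nonneg_left
              (Finset.le_sup' (fun a => q t s a) (Finset.mem_univ a)) ((hπ t).1 s a)
        _ = _ := by rw [← Finset.sum_mul, (hπ t).2]; ring
      refine h2.trans (Finset.sup'_le _ _ fun a _ => ?_)
      exact (hqle t s a).trans (Finset.le_sup' (fun a => qinf s a) (Finset.mem_univ a))
    exact ⟨a0, le_antisymm (hopt s a0) h1⟩
  choose astar hastar using hvle_max
  -- the greedy policy is optimal, identify qstar with qinf
  have hπstar : IsPolicy (fun s a => if a = astar s then (1:ℝ) else 0) := by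
    constructor
    · intro s a; dsimp only; split <;> norm_num
    · intro s; simp
  have hvstar : IsValueOf p r γ (fun s a => if a = astar s then (1:ℝ) else 0) vinf := by
    intro s
    have h1 : ∑ a, (if a = astar s then (1:ℝ) else 0) * (r s a + γ * ∑ s', p s a s' * vinf s')
        = r s (astar s) + γ * ∑ s', p s (astar s) s' * vinf s' := by
      simp [ite_mul]
    rw [h1]
    exact (hastar s).symm
  have hqstar_eq : ∀ s a, qstar s a = qinf s a := by
    intro s a
    have hmem : qinf s a ∈ {x : ℝ | ∃ (π' : S → A → ℝ) (w : S → ℝ),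
        IsPolicy π' ∧ IsValueOf p r γ π' w ∧ r s a + γ * ∑ s', p s a s' * w s' = x} :=
      ⟨_, vinf, hπstar, hvstar, rfl⟩
    have h1 : qinf s a ≤ qstar s a := (hqstar s a).2 hmem
    obtain ⟨π', w, hπ', hw', heq⟩ := (hqstar s a).1
    have hwle : ∀ s', w s' ≤ vinf s' := by
      refine comparison p hp hpsum r γ hγ0 hγ1 π' hπ' w vinf (fun s' => le_of_eq (hw' s')) ?_
      intro s'
      calc ∑ a', π' s' a' * (r s' a' + γ * ∑ s'', p s' a' s'' * vinf s'')
          ≤ ∑ a', π' s' a' * vinf s' := Finset.sum_le_sum fun a' _ =>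
            mul_le_mul_of_nonneg_left (hopt s' a') (hπ'.1 s' a')
      _ = vinf s' := by rw [← Finset.sum_mul, hπ'.2]; ring
    have h2 : qstar s a ≤ qinf s a := by
      rw [← heq]
      have h3 : ∑ s', p s a s' * w s' ≤ ∑ s', p s a s' * vinf s' :=
        Finset.sum_le_sum fun s' _ => mul_le_mul_of_nonneg_left (hwle s') (hp s a s')
      show r s a + γ * ∑ s', p s a s' * w s' ≤ r s a + γ * ∑ s', p s a s' * vinf s'
      nlinarith
    exact le_antisymm h2 h1
  -- minimal suboptimality gap
  obtain ⟨δ0, hδ0pos, hδ0gap⟩ : ∃ δ0 : ℝ, 0 < δ0 ∧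
      ∀ s a, qinf s a ≠ vinf s → qinf s a + δ0 ≤ vinf s := by
    by_cases hF : (Finset.univ.filter fun sa : S × A => qinf sa.1 sa.2 ≠ vinf sa.1).Nonempty
    · refine ⟨(Finset.univ.filter fun sa : S × A => qinf sa.1 sa.2 ≠ vinf sa.1).inf' hF
        (fun sa => vinf sa.1 - qinf sa.1 sa.2), ?_, ?_⟩
      · rw [Finset.lt_inf'_iff]
        intro sa hsa
        have h1 := (Finset.mem_filter.mp hsa).2
        have h2 := hopt sa.1 sa.2
        rcases lt_or_eq_of_le h2 with h | h
        · linarith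
        · exact absurd h h1
      · intro s a hne
        have hmem : (s, a) ∈ Finset.univ.filter fun sa : S × A => qinf sa.1 sa.2 ≠ vinf sa.1 :=
          Finset.mem_filter.mpr ⟨Finset.mem_univ _, hne⟩
        have h3 := Finset.inf'_le (fun sa : S × A => vinf sa.1 - qinf sa.1 sa.2) hmem
        linarith
    · exact ⟨1, one_pos, fun s a hne => absurd
        ⟨(s,a), Finset.mem_filter.mpr ⟨Finset.mem_univ _, hne⟩⟩ hF⟩
  -- a time after which all q-values are uniformly close to optimal
  obtain ⟨T, hT⟩ : ∃ T : ℕ, ∀ t, T ≤ t → ∀ s b, qinf s b - δ0/4 < q t s b := by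
    have hev : ∀ᶠ t in atTop, ∀ sb : S × A, qinf sb.1 sb.2 - δ0/4 < q t sb.1 sb.2 :=
      eventually_all.mpr fun sb => (hqtend sb.1 sb.2).eventually
        (eventually_gt_nhds (by linarith))
    obtain ⟨T, hT⟩ := eventually_atTop.mp hev
    exact ⟨T, fun t ht s b => hT t ht (s, b)⟩
  have hgapT : ∀ t, T ≤ t → ∀ s a b, qinf s a ≠ vinf s → qinf s b = vinf s →
      q t s a + δ0/2 ≤ q t s b := by
    intro t ht s a b ha hb
    have h1 := hT t ht s b
    have h2 := hqle t s a
    have h3 := hδ0gap s a ha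
    rw [hb] at h1
    clear_value vinf qinf
    linarith
  -- each state eventually plays only optimal actions
  have hent : ∀ s, ∃ t1, T ≤ t1 ∧ ∀ a, qinf s a ≠ vinf s → π (t1+1) s a = 0 := by
    intro s
    by_contra hcon
    push_neg at hcon
    refine hdiverge s ((δ0/2)^2/2) (by positivity) T ?_
    intro t ht
    obtain ⟨a, hane, hapos⟩ := hcon t ht
    have hapos' : 0 < π (t+1) s a := lt_of_le_of_ne ((hπ (t+1)).1 s a) (Ne.symm hapos)
    exact hkey (δ0/2) (by linarith) t s a (astar s) hapos'
      (hgapT t ht s a (astar s) hane (hastar s))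
  -- and being supported on optimal actions is absorbing
  have habs : ∀ t, T ≤ t → ∀ s, (∀ a, qinf s a ≠ vinf s → π t s a = 0) →
      ∀ a, qinf s a ≠ vinf s → π (t+1) s a = 0 := by
    intro t ht s hsupp a hbad
    by_contra hpos
    have hapos : 0 < π (t+1) s a := lt_of_le_of_ne ((hπ (t+1)).1 s a) (Ne.symm hpos)
    have hbO : ∀ b ∈ Finset.univ.filter (fun b => qinf s b = vinf s),
        π t s b + (η t * d t s) * (δ0/2) + π (t+1) s a ≤ π (t+1) s b := by
      intro b hb
      have hgapb := hgapT t ht s a b hbad (Finset.mem_filter.mp hb).2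
      have hpair := hPair t s a b hapos
      have hz : π t s a = 0 := hsupp a hbad
      have hm : 0 ≤ (η t * d t s) * (q t s b - q t s a - δ0/2) :=
        mul_nonneg (hα t s).le (by linarith)
      nlinarith
    have h1O : ∑ b ∈ Finset.univ.filter (fun b => qinf s b = vinf s), π t s b = 1 := by
      have hsp := Finset.sum_filter_add_sum_filter_not Finset.univ
        (fun b => qinf s b = vinf s) (π t s)
      have h0 : ∑ b ∈ Finset.univ.filter (fun b => ¬ qinf s b = vinf s), π t s b = 0 :=
        Finset.sum_eq_zero fun b hb => hsupp b (Finset.mem_filter.mp hb).2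
      rw [h0, add_zero] at hsp
      rw [hsp, (hπ t).2]
    have hOne : (Finset.univ.filter (fun b => qinf s b = vinf s)).Nonempty :=
      ⟨astar s, Finset.mem_filter.mpr ⟨Finset.mem_univ _, hastar s⟩⟩
    have hlt : ∑ b ∈ Finset.univ.filter (fun b => qinf s b = vinf s), π t s b
        < ∑ b ∈ Finset.univ.filter (fun b => qinf s b = vinf s), π (t+1) s b := by
      refine Finset.sum_lt_sum_of_nonempty hOne fun b hb => ?_
      have h5 := hbO b hb
      nlinarith [hα t s]
    have hle1 : ∑ b ∈ Finset.univ.filter (fun b => qinf s b = vinf s), π (t+1) s b ≤ 1 := by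
      rw [← (hπ (t+1)).2 s]
      exact Finset.sum_le_sum_of_subset_of_nonneg
        (Finset.filter_subset _ _) (fun b _ _ => (hπ (t+1)).1 s b)
    rw [h1O] at hlt
    linarith
  -- assemble the final time
  choose ts hts1 hts2 using hent
  have hstay : ∀ s t, ts s + 1 ≤ t → ∀ a, qinf s a ≠ vinf s → π t s a = 0 := by
    intro s t ht
    induction t, ht using Nat.le_induction with
    | base => exact hts2 s
    | succ t ht ih =>
      exact habs t (le_trans (hts1 s) (by omega)) s ih
  refine ⟨(Finset.univ.sup ts) + 1, fun t ht s a => ?_⟩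
  have hsupp : ∀ s' a', qinf s' a' ≠ vinf s' → π t s' a' = 0 := by
    intro s' a' h
    refine hstay s' t ?_ a' h
    have h6 := Finset.le_sup (f := ts) (Finset.mem_univ s')
    omega
  have hveq : ∀ s', v t s' = vinf s' := by
    have hge : ∀ s', vinf s' ≤ v t s' := by
      refine comparison p hp hpsum r γ hγ0 hγ1 (π t) (hπ t) vinf (v t) ?_
        (fun s' => le_of_eq (hv t s').symm)
      intro s'
      have hsum1 : ∑ a', π t s' a' * (r s' a' + γ * ∑ s'', p s' a' s'' * vinf s'')
          = vinf s' := by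
        have h1 : ∀ a', π t s' a' * (r s' a' + γ * ∑ s'', p s' a' s'' * vinf s'')
            = π t s' a' * vinf s' := by
          intro a'
          by_cases hcase : qinf s' a' = vinf s'
          · rw [show r s' a' + γ * ∑ s'', p s' a' s'' * vinf s'' = qinf s' a' from rfl, hcase]
          · rw [hsupp s' a' hcase]; ring
        rw [Finset.sum_congr rfl fun a' _ => h1 a', ← Finset.sum_mul, (hπ t).2]; ring
      exact le_of_eq hsum1.symm
    exact fun s' => le_antisymm (hle_vinf t s') (hge s')
  rw [hq, hqstar_eq]
  show _ = r s a + γ * ∑ s', p s a s' * vinf s'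
  rw [Finset.sum_congr rfl fun s' _ => by rw [hveq s']]
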